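/- Fix k ≥ 1 and m with 0 ≤ m ≤ k. The number of weakly decreasing sequences (j_1 ≥ j_2 ≥ ⋯ ≥ j_m) of positive integers with j_1 ≤ k such that, writing their distinct values in decreasing order as v_1 > v_2 > ⋯ > v_p with respective multiplicities r_1,…,r_p and setting v_0 = k+1, one has r_q ≤ v_{q−1} − v_q for every 1 ≤ q ≤ p, equals c(m, k−m), the number of weak compositions of m with exactly k−m zeros. Moreover, for m > k there are no such sequences. -/

import Mathlib

/-- `c(n,i)`: the number of weak compositions of `n` (finite lists of nonnegative
integers summing to `n`) with exactly `i` entries equal to `0`. -/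
noncomputable def wc (n i : ℕ) : ℕ :=
  Set.ncard {l : List ℕ | l.sum = n ∧ l.count 0 = i}

/-- A weakly decreasing sequence of positive integers with first entry at most `k`
such that, writing the distinct values in decreasing order as `v_1 > ⋯ > v_p`
(that is, `js.dedup`) with multiplicities `r_1, …, r_p` and setting `v_0 = k+1`,
one has `r_q ≤ v_{q-1} - v_q` for all `q`. -/
def GoodSeq (k : ℕ) (js : List ℕ) : Prop :=
  (∀ j ∈ js, 1 ≤ j) ∧ (∀ a ∈ js.head?, a ≤ k) ∧
  List.Chain' (fun a b => b ≤ a) js ∧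
  ∀ (q : ℕ) (hq : q < js.dedup.length),
    js.count (js.dedup[q]'hq) ≤
      (((k + 1) :: js.dedup)[q]'(by simp only [List.length_cons]; omega)) -
        js.dedup[q]'hq

namespace Stmt14

/-- encoding from weak compositions to good sequences -/
def enc : ℕ → List ℕ → List ℕ
  | _, [] => []
  | v, 0 :: l => enc (v-1) l
  | v, (r+1) :: l => List.replicate (r+1) (v-(r+1)) ++ enc (v-(r+1)) l

@[simp] lemma enc_nil (v : ℕ) : enc v [] = [] := rfl
@[simp] lemma enc_zero (v : ℕ) (l : List ℕ) : enc v (0 :: l) = enc (v-1) l := rfl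
lemma enc_pos (v r : ℕ) (l : List ℕ) :
    enc v ((r+1) :: l) = List.replicate (r+1) (v-(r+1)) ++ enc (v-(r+1)) l := rfl

lemma length_enc (l : List ℕ) : ∀ v, (enc v l).length = l.sum := by
  induction l with
  | nil => simp
  | cons a t ih =>
    intro v
    match a with
    | 0 => simp [ih]
    | r+1 => simp [enc_pos, ih]

lemma enc_replicate_zero (z : ℕ) : ∀ v l, enc v (List.replicate z 0 ++ l) = enc (v - z) l := by
  induction z with
  | zero => simp
  | succ n ih =>
    intro v l
    simp only [List.replicate_succ, List.cons_append, enc_zero, ih]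
    congr 1
    omega

lemma enc_bounds (l : List ℕ) : ∀ v, l.sum + l.count 0 ≤ v - 1 →
    ∀ x ∈ enc v l, v - (l.sum + l.count 0) ≤ x ∧ x < v := by
  induction l with
  | nil => simp
  | cons a t ih =>
    intro v hv x hx
    match a with
    | 0 =>
      simp only [enc_zero] at hx
      simp only [List.sum_cons, List.count_cons_self] at hv ⊢
      obtain ⟨h1, h2⟩ := ih (v-1) (by omega) x hx
      constructor <;> omega
    | r+1 =>
      rw [enc_pos] at hx
      simp only [List.sum_cons, List.count_cons_of_ne (by omega : r+1 ≠ (0:ℕ))] at hv ⊢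
      rcases List.mem_append.1 hx with h | h
      · rw [List.eq_of_mem_replicate h]
        constructor <;> omega
      · obtain ⟨h1, h2⟩ := ih (v-(r+1)) (by omega) x h
        constructor <;> omega

instance : IsTrans ℕ (fun a b => b ≤ a) := ⟨fun _ _ _ h1 h2 => le_trans h2 h1⟩

/-- version of `GoodSeq` with strict bound `v = k+1` and Pairwise -/
def GS (v : ℕ) (js : List ℕ) : Prop :=
  (∀ j ∈ js, 1 ≤ j) ∧ (∀ a ∈ js.head?, a < v) ∧
  List.Pairwise (fun a b => b ≤ a) js ∧
  ∀ (q : ℕ) (hq : q < js.dedup.length),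
    js.count (js.dedup[q]'hq) ≤
      ((v :: js.dedup)[q]'(by simp only [List.length_cons]; omega)) - js.dedup[q]'hq

lemma goodSeq_iff (k : ℕ) (js : List ℕ) : GoodSeq k js ↔ GS (k+1) js := by
  simp only [GoodSeq, GS, List.Chain', List.isChain_iff_pairwise, Nat.lt_succ_iff]

lemma GS_mono {v v' : ℕ} (h : v ≤ v') {js : List ℕ} (hg : GS v js) : GS v' js := by
  obtain ⟨h1, h2, h3, h4⟩ := hg
  refine ⟨h1, fun a ha => lt_of_lt_of_le (h2 a ha) h, h3, fun q hq => ?_⟩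
  match q with
  | 0 =>
    have := h4 0 hq
    simp only [List.getElem_cons_zero] at this ⊢
    omega
  | q+1 =>
    have := h4 (q+1) hq
    simpa only [List.getElem_cons_succ] using this

lemma dedup_run {j : ℕ} {t : List ℕ} (hj : j ∉ t) :
    ∀ r, 1 ≤ r → (List.replicate r j ++ t).dedup = j :: t.dedup := by
  intro r hr
  induction r with
  | zero => omega
  | succ n ih =>
    match n, ih with
    | 0, _ =>
      exact List.dedup_cons_of_notMem hj
    | n+1, ih =>
      rw [List.replicate_succ, List.cons_append, List.dedup_cons_of_mem
        (by simp [List.mem_append, List.mem_replicate]), ih (by omega)]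

lemma count_enc_lt {l : List ℕ} {v j : ℕ} (hinv : l.sum + l.count 0 ≤ v - 1)
    (hjv : v ≤ j) : (enc v l).count j = 0 :=
  List.count_eq_zero.2 fun h => by
    have := (enc_bounds l v hinv j h).2; omega

lemma GS_run {v j r : ℕ} {t : List ℕ} (hj1 : 1 ≤ j) (hjv : j < v) (hrv : r + 1 ≤ v - j)
    (ht : GS j t) (hlt : ∀ x ∈ t, x < j) : GS v (List.replicate (r+1) j ++ t) := by
  obtain ⟨h1, _h2, h3, h4⟩ := ht
  have hjnt : j ∉ t := fun h => lt_irrefl j (hlt j h)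
  have hded : (List.replicate (r+1) j ++ t).dedup = j :: t.dedup := dedup_run hjnt _ (by omega)
  refine ⟨?_, ?_, ?_, ?_⟩
  · intro x hx
    rcases List.mem_append.1 hx with h | h
    · rw [List.eq_of_mem_replicate h]; exact hj1
    · exact h1 x h
  · rw [List.replicate_succ, List.cons_append]
    intro a ha
    simp only [List.head?_cons, Option.mem_some_iff] at ha
    omega
  · rw [List.pairwise_append]
    refine ⟨List.pairwise_replicate.2 (Or.inr le_rfl), h3, ?_⟩
    intro a ha b hb
    rw [List.eq_of_mem_replicate ha]
    exact le_of_lt (hlt b hb)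
  · intro q hq
    rw [hded] at hq
    simp only [List.length_cons] at hq
    match q with
    | 0 =>
      simp only [hded, List.getElem_cons_zero, List.count_append, List.count_replicate,
        beq_self_eq_true, if_true, List.count_eq_zero.2 hjnt]
      omega
    | q+1 =>
      have hq' : q < t.dedup.length := by omega
      have hmem : t.dedup[q]'hq' ∈ t := List.mem_dedup.1 (List.getElem_mem _)
      have hne : t.dedup[q]'hq' ≠ j := by have := hlt _ hmem; omega
      have := h4 q hq'
      simp only [hded, List.getElem_cons_succ, List.count_append, List.count_replicate,
        beq_iff_eq, if_neg hne.symm, Nat.zero_add]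
      match q with
      | 0 => simpa only [List.getElem_cons_zero] using this
      | q+1 => simpa only [List.getElem_cons_succ] using this

lemma enc_GS (l : List ℕ) : ∀ v, l.sum + l.count 0 ≤ v - 1 → GS v (enc v l) := by
  induction l with
  | nil => exact fun v _ => ⟨by simp, by simp, by simp, by simp⟩
  | cons a t ih =>
    intro v hv
    match a with
    | 0 =>
      simp only [List.sum_cons, List.count_cons_self] at hv
      exact GS_mono (by omega) (ih (v-1) (by omega))
    | r+1 =>
      simp only [List.sum_cons, List.count_cons_of_ne (by omega : r+1 ≠ (0:ℕ))] at hv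
      rw [enc_pos]
      have hinv : t.sum + t.count 0 ≤ (v-(r+1)) - 1 := by omega
      refine GS_run (by omega) (by omega) (by omega) (ih _ hinv) ?_
      intro x hx
      exact (enc_bounds t _ hinv x hx).2

lemma exists_run {j : ℕ} {tl : List ℕ}
    (h : List.Pairwise (fun a b => b ≤ a) (j :: tl)) :
    ∃ r t, j :: tl = List.replicate (r+1) j ++ t ∧ (∀ x ∈ t, x < j) := by
  induction tl generalizing j with
  | nil => exact ⟨0, [], by simp, by simp⟩
  | cons b t2 ih =>
    have hb : b ≤ j := List.rel_of_pairwise_cons h List.mem_cons_self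
    rcases eq_or_lt_of_le hb with heq | hlt
    · obtain ⟨r, t, h1, h2⟩ := ih (h.sublist (List.cons_sublist_cons.2 (List.sublist_cons_self _ _)))
      subst heq
      exact ⟨r+1, t, by rw [List.replicate_succ, List.cons_append, ← h1], h2⟩
    · refine ⟨0, b :: t2, by simp, ?_⟩
      intro x hx
      rcases List.mem_cons.1 hx with rfl | hx2
      · exact hlt
      · exact lt_of_le_of_lt
          (List.rel_of_pairwise_cons (h.sublist (List.sublist_cons_self _ _)) hx2) hlt

lemma GS_peel {v j r : ℕ} {t : List ℕ} (hv : GS v (List.replicate (r+1) j ++ t))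
    (hlt : ∀ x ∈ t, x < j) (hj1 : 1 ≤ j) : GS j t ∧ r + 1 ≤ v - j := by
  obtain ⟨h1, h2, h3, h4⟩ := hv
  have hjnt : j ∉ t := fun h => lt_irrefl j (hlt j h)
  have hded : (List.replicate (r+1) j ++ t).dedup = j :: t.dedup := dedup_run hjnt _ (by omega)
  have hcnt : ∀ x ≠ j, (List.replicate (r+1) j ++ t).count x = t.count x := by
    intro x hx
    simp [List.count_append, List.count_replicate, Ne.symm hx]
  constructor
  · refine ⟨fun x hx => h1 x (by simp [hx]), ?_, h3.sublist (List.sublist_append_right _ _), ?_⟩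
    · intro a ha
      have : a ∈ t := List.mem_of_mem_head? ha
      exact hlt a this
    · intro q hq
      have hq2 : q + 1 < (List.replicate (r+1) j ++ t).dedup.length := by
        rw [hded]; simp only [List.length_cons]; omega
      have := h4 (q+1) hq2
      have hmem : t.dedup[q]'hq ∈ t := List.mem_dedup.1 (List.getElem_mem _)
      have hne : t.dedup[q]'hq ≠ j := by have := hlt _ hmem; omega
      simp only [hded, List.getElem_cons_succ] at this
      rw [hcnt _ hne] at this
      exact this
  · have hq2 : 0 < (List.replicate (r+1) j ++ t).dedup.length := by
      rw [hded]; simp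
    have := h4 0 hq2
    simp only [hded, List.getElem_cons_zero, List.count_append, List.count_replicate,
      beq_self_eq_true, if_true, List.count_eq_zero.2 hjnt] at this
    omega

lemma enc_surj : ∀ (n : ℕ) (js : List ℕ) (v : ℕ), js.length ≤ n → 1 ≤ v → GS v js →
    ∃ l : List ℕ, l.sum = js.length ∧ l.count 0 = v - 1 - js.length ∧
      js.length ≤ v - 1 ∧ enc v l = js := by
  intro n
  induction n with
  | zero =>
    intro js v hn hv _
    have : js = [] := List.length_eq_zero_iff.1 (by omega)
    subst this
    refine ⟨List.replicate (v-1) 0, by simp, by simp, by simp, ?_⟩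
    rw [← List.append_nil (List.replicate (v-1) 0), enc_replicate_zero]
    simp
  | succ n ih =>
    intro js v hn hv hg
    match js with
    | [] =>
      refine ⟨List.replicate (v-1) 0, by simp, by simp, by simp, ?_⟩
      rw [← List.append_nil (List.replicate (v-1) 0), enc_replicate_zero]
      simp
    | j :: tl =>
      obtain ⟨r, t, hdec, hlt⟩ := exists_run hg.2.2.1
      have hj1 : 1 ≤ j := hg.1 j (by simp)
      have hjv : j < v := hg.2.1 j (by simp)
      rw [hdec] at hg
      obtain ⟨hgt, hrv⟩ := GS_peel hg hlt hj1
      have hlen : (j :: tl).length = (r+1) + t.length := by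
        rw [hdec]; simp
      have htn : t.length ≤ n := by
        have := congrArg List.length hdec
        simp at this; omega
      obtain ⟨l', hs', hc', hl', he'⟩ := ih t j htn hj1 hgt
      refine ⟨List.replicate (v - j - (r+1)) 0 ++ (r+1) :: l', ?_, ?_, ?_, ?_⟩
      · simp [List.sum_append, hs', hlen]
      · rw [List.count_append, List.count_cons_of_ne (by omega : r+1 ≠ (0:ℕ))]
        simp only [List.count_replicate, beq_self_eq_true, if_true, hc', hlen]
        omega
      · omega
      · rw [enc_replicate_zero, enc_pos]
        have h1 : v - (v - j - (r+1)) - (r+1) = j := by omega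
        rw [h1, he', hdec]

lemma zero_decomp (l : List ℕ) : (l = List.replicate (l.count 0) 0) ∨
    ∃ z r t, l = List.replicate z 0 ++ (r+1) :: t := by
  induction l with
  | nil => left; simp
  | cons a t ih =>
    match a with
    | 0 =>
      rcases ih with h | ⟨z, r, t', h⟩
      · left
        rw [List.count_cons_self, List.replicate_succ]
        exact congrArg (0 :: ·) h
      · right
        exact ⟨z+1, r, t', by rw [List.replicate_succ, List.cons_append, ← h]⟩
    | r+1 => right; exact ⟨0, r, t, by simp⟩

lemma enc_inj : ∀ (n : ℕ) (l1 l2 : List ℕ) (v : ℕ), l1.length ≤ n →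
    l1.sum + l1.count 0 ≤ v - 1 → l2.sum + l2.count 0 ≤ v - 1 →
    l1.count 0 = l2.count 0 → enc v l1 = enc v l2 → l1 = l2 := by
  intro n
  induction n with
  | zero =>
    intro l1 l2 v hn h1 h2 hc he
    have : l1 = [] := List.length_eq_zero_iff.1 (by omega)
    subst this
    rcases zero_decomp l2 with h | ⟨z, r, t, h⟩
    · rw [h, ← hc]; simp
    · exfalso
      rw [h, enc_replicate_zero, enc_pos] at he
      simp at he
  | succ n ih =>
    intro l1 l2 v hn h1 h2 hc he
    rcases zero_decomp l1 with d1 | ⟨z1, r1, t1, d1⟩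
    · rcases zero_decomp l2 with d2 | ⟨z2, r2, t2, d2⟩
      · rw [d1, d2, hc]
      · exfalso
        rw [d1, d2] at he
        rw [← List.append_nil (List.replicate (l1.count 0) 0), enc_replicate_zero,
          enc_replicate_zero, enc_pos] at he
        simp at he
    · rcases zero_decomp l2 with d2 | ⟨z2, r2, t2, d2⟩
      · exfalso
        rw [d1, d2] at he
        rw [← List.append_nil (List.replicate (l2.count 0) 0), enc_replicate_zero,
          enc_replicate_zero, enc_pos] at he
        simp at he
      · -- both have a first positive entry
        have hs1 : l1.sum = (r1+1) + t1.sum := by rw [d1]; simp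
        have hc1 : l1.count 0 = z1 + t1.count 0 := by
          rw [d1]; simp [List.count_append, List.count_replicate,
            List.count_cons_of_ne (by omega : r1+1 ≠ (0:ℕ))]
        have hs2 : l2.sum = (r2+1) + t2.sum := by rw [d2]; simp
        have hc2 : l2.count 0 = z2 + t2.count 0 := by
          rw [d2]; simp [List.count_append, List.count_replicate,
            List.count_cons_of_ne (by omega : r2+1 ≠ (0:ℕ))]
        rw [d1, d2, enc_replicate_zero, enc_replicate_zero, enc_pos, enc_pos] at he
        set j1 := v - z1 - (r1+1) with hj1
        set j2 := v - z2 - (r2+1) with hj2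
        have hinv1 : t1.sum + t1.count 0 ≤ j1 - 1 := by omega
        have hinv2 : t2.sum + t2.count 0 ≤ j2 - 1 := by omega
        -- heads give j1 = j2
        have hhead : j1 = j2 := by
          have := congrArg List.head? he
          rw [List.replicate_succ, List.replicate_succ] at this
          simpa using this
        have hj12 : z1 + r1 = z2 + r2 := by omega
        rw [← hhead] at he hinv2
        -- counts of j1 give r1 = r2
        have hcount : r1 + 1 = r2 + 1 := by
          have := congrArg (List.count j1) he
          rw [List.count_append, List.count_append, List.count_replicate,
            List.count_replicate, count_enc_lt hinv1 le_rfl,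
            count_enc_lt hinv2 le_rfl] at this
          simpa using this
        have hr : r1 = r2 := by omega
        have hz : z1 = z2 := by omega
        have ht : t1 = t2 := by
          apply ih t1 t2 j1
          · have : l1.length = z1 + 1 + t1.length := by rw [d1]; simp; omega
            omega
          · exact hinv1
          · exact hinv2
          · omega
          · exact List.append_cancel_left
              (by rw [he, hr] : List.replicate (r1+1) j1 ++ enc j1 t1
                = List.replicate (r1+1) j1 ++ enc j1 t2)
        rw [d1, d2, hz, hr, ht]

end Stmt14

open Stmt14 in
/-- For `0 ≤ m ≤ k`, the number of such sequences of length `m` is `c(m, k-m)`,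
the number of weak compositions of `m` with exactly `k-m` zeros; for `m > k`
there are none. -/
theorem stmt14 (k : ℕ) (hk : 1 ≤ k) :
    (∀ m ≤ k,
      Set.ncard {js : List ℕ | js.length = m ∧ GoodSeq k js} = wc m (k - m)) ∧
    (∀ m, k < m → {js : List ℕ | js.length = m ∧ GoodSeq k js} = ∅) := by
  constructor
  · intro m hm
    have himg : enc (k+1) '' {l : List ℕ | l.sum = m ∧ l.count 0 = k - m}
        = {js : List ℕ | js.length = m ∧ GoodSeq k js} := by
      ext js
      constructor
      · rintro ⟨l, ⟨hs, hc⟩, rfl⟩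
        have hinv : l.sum + l.count 0 ≤ (k+1) - 1 := by omega
        exact ⟨by rw [length_enc, hs], (goodSeq_iff _ _).2 (enc_GS l (k+1) hinv)⟩
      · rintro ⟨hlen, hg⟩
        obtain ⟨l, hs, hc, hle, he⟩ :=
          enc_surj js.length js (k+1) le_rfl (by omega) ((goodSeq_iff _ _).1 hg)
        exact ⟨l, ⟨by rw [hs]; exact hlen, by rw [hc, hlen]; omega⟩, he⟩
    have hinj : Set.InjOn (enc (k+1)) {l : List ℕ | l.sum = m ∧ l.count 0 = k - m} := by
      rintro l1 ⟨hs1, hc1⟩ l2 ⟨hs2, hc2⟩ he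
      exact enc_inj l1.length l1 l2 (k+1) le_rfl (by omega) (by omega)
        (by rw [hc1, hc2]) he
    rw [← himg, Set.ncard_image_of_injOn hinj]
    rfl
  · intro m hm
    ext js
    simp only [Set.mem_setOf_eq, Set.mem_empty_iff_false, iff_false, not_and]
    intro hlen hg
    obtain ⟨l, _, _, hle, _⟩ :=
      enc_surj js.length js (k+1) le_rfl (by omega) ((goodSeq_iff _ _).1 hg)
    omega
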